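/- Let I ⊆ ℝ be an interval and let y : I → Y be differentiable with y'(t) = J(y(t))(∇E(y(t))) + K(y(t))(∇S(y(t))) for all t ∈ I. Then t ↦ E(y(t)) is constant on I and t ↦ S(y(t)) is monotone nondecreasing on I. -/

import Mathlib

open RealInnerProductSpace

/-- Let `Y` be a finite-dimensional real inner product space,
`E, S : Y → ℝ` continuously differentiable, and `J, K` assign to each `y` linear
operators with `J(y)` skew-adjoint, `K(y)` self-adjoint positive semidefinite, and
the non-interaction conditions `J(y)∇S(y) = 0`, `K(y)∇E(y) = 0`.  If `y : I → Y` is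
differentiable on an interval `I` with `y' = J(y)∇E(y) + K(y)∇S(y)`, then `E ∘ y` is
constant on `I` and `S ∘ y` is nondecreasing on `I`. -/
theorem generic_energy_conserved_entropy_nondecreasing
    {Y : Type*} [NormedAddCommGroup Y] [InnerProductSpace ℝ Y] [FiniteDimensional ℝ Y]
    (E S : Y → ℝ) (hE : ContDiff ℝ 1 E) (hS : ContDiff ℝ 1 S)
    (J K : Y → Y →L[ℝ] Y)
    (hJ : ∀ y : Y, ContinuousLinearMap.adjoint (J y) = -(J y))
    (hKsa : ∀ y : Y, ContinuousLinearMap.adjoint (K y) = K y)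
    (hKpos : ∀ (y : Y) (v : Y), 0 ≤ ⟪K y v, v⟫)
    (hNIJ : ∀ y : Y, J y (gradient S y) = 0)
    (hNIK : ∀ y : Y, K y (gradient E y) = 0)
    (I : Set ℝ) (hI : Set.OrdConnected I)
    (y : ℝ → Y)
    (hy : ∀ t ∈ I, HasDerivWithinAt y
      (J (y t) (gradient E (y t)) + K (y t) (gradient S (y t))) I t) :
    (∀ s ∈ I, ∀ t ∈ I, E (y s) = E (y t)) ∧
    (∀ s ∈ I, ∀ t ∈ I, s ≤ t → S (y s) ≤ S (y t)) := by
  have hconv : Convex ℝ I := convex_iff_ordConnected.mpr hI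
  have hycont : ContinuousOn y I := fun t ht => (hy t ht).continuousWithinAt
  -- derivative of E ∘ y
  have hdE : ∀ t ∈ I, HasDerivWithinAt (fun t => E (y t))
      ⟪gradient E (y t), J (y t) (gradient E (y t)) + K (y t) (gradient S (y t))⟫ I t := by
    intro t ht
    have hg : HasGradientAt E (gradient E (y t)) (y t) :=
      ((hE.differentiable one_ne_zero) (y t)).hasGradientAt
    have := hg.hasFDerivAt.comp_hasDerivWithinAt t (hy t ht)
    simp [InnerProductSpace.toDual_apply_apply] at this ⊢; exact this
  have hdS : ∀ t ∈ I, HasDerivWithinAt (fun t => S (y t))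
      ⟪gradient S (y t), J (y t) (gradient E (y t)) + K (y t) (gradient S (y t))⟫ I t := by
    intro t ht
    have hg : HasGradientAt S (gradient S (y t)) (y t) :=
      ((hS.differentiable one_ne_zero) (y t)).hasGradientAt
    have := hg.hasFDerivAt.comp_hasDerivWithinAt t (hy t ht)
    simp [InnerProductSpace.toDual_apply_apply] at this ⊢; exact this
  have hEzero : ∀ v : Y,
      ⟪gradient E v, J v (gradient E v) + K v (gradient S v)⟫ = 0 := by
    intro v
    have h1 : ⟪gradient E v, J v (gradient E v)⟫ = 0 := by
      have := ContinuousLinearMap.adjoint_inner_left (J v) (gradient E v) (gradient E v)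
      rw [hJ v] at this
      simp only [ContinuousLinearMap.neg_apply, inner_neg_left] at this
      have hsym := real_inner_comm (gradient E v) (J v (gradient E v))
      linarith [this, hsym]
    have h2 : ⟪gradient E v, K v (gradient S v)⟫ = 0 := by
      have := ContinuousLinearMap.adjoint_inner_left (K v) (gradient S v) (gradient E v)
      rw [hKsa v] at this
      rw [← this, hNIK v, inner_zero_left]
    rw [inner_add_right, h1, h2, add_zero]
  have hSnonneg : ∀ v : Y,
      0 ≤ ⟪gradient S v, J v (gradient E v) + K v (gradient S v)⟫ := by
    intro v
    have h1 : ⟪gradient S v, J v (gradient E v)⟫ = 0 := by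
      have := ContinuousLinearMap.adjoint_inner_left (J v) (gradient E v) (gradient S v)
      rw [hJ v] at this
      simp only [ContinuousLinearMap.neg_apply, inner_neg_left] at this
      rw [← this, hNIJ v, inner_zero_left, neg_zero]
    have h2 : 0 ≤ ⟪gradient S v, K v (gradient S v)⟫ := by
      rw [real_inner_comm]; exact hKpos v _
    rw [inner_add_right, h1, zero_add]; exact h2
  constructor
  · -- E constant : show both monotone and antitone
    have hmono : MonotoneOn (fun t => E (y t)) I :=
      monotoneOn_of_hasDerivWithinAt_nonneg hconv
        (((hE.continuous).comp_continuousOn hycont))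
        (fun t ht => ((hdE t (interior_subset ht)).mono interior_subset))
        (fun t ht => le_of_eq (hEzero (y t)).symm)
    have hanti : AntitoneOn (fun t => E (y t)) I :=
      antitoneOn_of_hasDerivWithinAt_nonpos hconv
        (((hE.continuous).comp_continuousOn hycont))
        (fun t ht => ((hdE t (interior_subset ht)).mono interior_subset))
        (fun t ht => le_of_eq (hEzero (y t)))
    intro s hs t ht
    rcases le_total s t with h | h
    · exact le_antisymm (hmono hs ht h) (hanti hs ht h)
    · exact le_antisymm (hanti ht hs h) (hmono ht hs h)
  · intro s hs t ht hst
    exact monotoneOn_of_hasDerivWithinAt_nonneg hconv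
      (((hS.continuous).comp_continuousOn hycont))
      (fun u hu => ((hdS u (interior_subset hu)).mono interior_subset))
      (fun u hu => hSnonneg (y u)) hs ht hst
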